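/- Let y : [t₀,∞) → [0,∞) be absolutely continuous, 0 < σ < 1, β₂ > 0, and suppose y'(t) + β₂ y(t) ≤ C₀ y(t)^{1-σ} + m₁ for a.e. t ≥ t₀. Then y(t) ≤ (1/σ) y(t₀) e^{-β₂(t - t₀)} + (1/σ) m₁ C(β₂) + (C₀ C(β₂σ))^{1/σ}, where C(ν) = e^ν/(1-e^{-ν}). In particular limsup_{t→∞} y(t) ≤ (1/σ) m₁ C(β₂) + (C₀ C(β₂σ))^{1/σ}. -/

import Mathlib

open MeasureTheory Set

/-- `1/x ≤ eˣ/(1-e⁻ˣ)` for `x > 0`. -/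
lemma gronwall_aux_C {x : ℝ} (hx : 0 < x) :
    1 / x ≤ Real.exp x / (1 - Real.exp (-x)) := by
  have h1 : Real.exp (-x) < 1 := by
    rw [Real.exp_lt_one_iff]; linarith
  have h1' : 0 < 1 - Real.exp (-x) := by linarith
  rw [div_le_div_iff₀ hx h1']
  have h2 : 1 - Real.exp (-x) ≤ x := by
    have := Real.add_one_le_exp (-x); linarith
  have h3 : (1:ℝ) ≤ Real.exp x := Real.one_le_exp hx.le
  nlinarith

/-- Key scalar inequality: `σ ≤ (1 - σ^{σ/(1-σ)})^{1-σ}`. -/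
lemma gronwall_aux_lam {σ : ℝ} (h0 : 0 < σ) (h1 : σ < 1) :
    σ ≤ (1 - σ ^ (σ / (1 - σ))) ^ (1 - σ) := by
  have h1σ : 0 < 1 - σ := by linarith
  have h1pσ : (0:ℝ) < 1 + σ := by linarith
  have hlog1 : Real.log (1 + σ) ≤ σ := by
    have := Real.log_le_sub_one_of_pos h1pσ; linarith
  have hlog2 : Real.log σ ≤ σ - 1 := Real.log_le_sub_one_of_pos h0
  have key : (1 - σ) * Real.log (1 + σ) ≤ σ * (-Real.log σ) := by nlinarith
  have hlamle : σ ^ (σ / (1 - σ)) ≤ 1 / (1 + σ) := by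
    rw [Real.rpow_def_of_pos h0]
    have e1 : (1:ℝ) / (1 + σ) = Real.exp (-Real.log (1 + σ)) := by
      rw [Real.exp_neg, Real.exp_log h1pσ, one_div]
    rw [e1]
    apply Real.exp_le_exp.2
    rw [mul_comm, div_mul_eq_mul_div, div_le_iff₀ h1σ]
    nlinarith
  have hmono : σ / (1 + σ) ≤ 1 - σ ^ (σ / (1 - σ)) := by
    have e2 : σ / (1 + σ) = 1 - 1 / (1 + σ) := by field_simp; ring
    rw [e2]; linarith
  have hbase : (0:ℝ) < σ / (1 + σ) := by positivity
  have step2 : σ ≤ (σ / (1 + σ)) ^ (1 - σ) := by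
    have e3 : (σ / (1 + σ)) ^ (1 - σ) = Real.exp (Real.log (σ / (1 + σ)) * (1 - σ)) :=
      Real.rpow_def_of_pos hbase _
    have e4 : Real.log (σ / (1 + σ)) = Real.log σ - Real.log (1 + σ) :=
      Real.log_div h0.ne' h1pσ.ne'
    calc σ = Real.exp (Real.log σ) := (Real.exp_log h0).symm
      _ ≤ (σ / (1 + σ)) ^ (1 - σ) := by
          rw [e3, e4]
          apply Real.exp_le_exp.2
          nlinarith
  calc σ ≤ (σ / (1 + σ)) ^ (1 - σ) := step2
    _ ≤ (1 - σ ^ (σ / (1 - σ))) ^ (1 - σ) :=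
        Real.rpow_le_rpow hbase.le hmono (by linarith)

/-- Two-point concavity of `z ↦ z^σ`, `0 < σ ≤ 1`. -/
lemma gronwall_aux_concave2 {w₁ w₂ u₁ u₂ σ : ℝ} (hw₁ : 0 ≤ w₁) (hw₂ : 0 ≤ w₂)
    (hw : w₁ + w₂ = 1) (hu₁ : 0 ≤ u₁) (hu₂ : 0 ≤ u₂) (h0 : 0 < σ) (h1 : σ ≤ 1) :
    w₁ * u₁ ^ σ + w₂ * u₂ ^ σ ≤ (w₁ * u₁ + w₂ * u₂) ^ σ := by
  have hp : 1 ≤ 1 / σ := by rw [le_div_iff₀ h0]; linarith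
  have H := Real.arith_mean_le_rpow_mean (Finset.univ : Finset (Fin 2))
    ![w₁, w₂] ![u₁ ^ σ, u₂ ^ σ]
    (by intro i _; fin_cases i <;> simpa)
    (by simp [Fin.sum_univ_two, hw])
    (by intro i _; fin_cases i <;> simp [Real.rpow_nonneg, hu₁, hu₂]) hp
  simp only [Fin.sum_univ_two, Matrix.cons_val_zero, Matrix.cons_val_one, Matrix.head_cons] at H
  rw [one_div_one_div] at H
  have e₁ : (u₁ ^ σ) ^ (1/σ) = u₁ := by rw [one_div, Real.rpow_rpow_inv hu₁ h0.ne']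
  have e₂ : (u₂ ^ σ) ^ (1/σ) = u₂ := by rw [one_div, Real.rpow_rpow_inv hu₂ h0.ne']
  rwa [e₁, e₂] at H

/-- The split inequality `(x^σ + e)^{1/σ} ≤ x/σ + (e/σ)^{1/σ}`. -/
lemma gronwall_aux_split {x e σ : ℝ} (hx : 0 ≤ x) (he : 0 ≤ e) (h0 : 0 < σ) (h1 : σ < 1) :
    (x ^ σ + e) ^ (1/σ) ≤ x / σ + (e / σ) ^ (1/σ) := by
  set lam := σ ^ (σ / (1 - σ)) with hlam
  have hlampos : 0 < lam := Real.rpow_pos_of_pos h0 _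
  have hlamlt : lam < 1 := Real.rpow_lt_one h0.le h1 (div_pos h0 (by linarith))
  have hA : σ ≤ (1 - lam) ^ (1 - σ) := gronwall_aux_lam h0 h1
  have h1l : 0 < 1 - lam := by linarith
  have heσ : 0 ≤ e / σ := by positivity
  have key : x ^ σ + e ≤ (x / σ + (e/σ) ^ (1/σ)) ^ σ := by
    have hu₁ : 0 ≤ x / (σ * lam) := div_nonneg hx (by positivity)
    have hu₂ : 0 ≤ (e/σ) ^ (1/σ) / (1 - lam) :=
      div_nonneg (Real.rpow_nonneg heσ _) h1l.le
    have H := gronwall_aux_concave2 hlampos.le h1l.le (by ring) hu₁ hu₂ h0 h1.le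
    have e₁ : lam * (x / (σ * lam)) = x / σ := by field_simp
    have e₂ : (1 - lam) * ((e/σ) ^ (1/σ) / (1 - lam)) = (e/σ) ^ (1/σ) := by field_simp
    rw [e₁, e₂] at H
    refine le_trans ?_ H
    -- first term equals x^σ
    have hlam1σ : lam ^ (1 - σ) = σ ^ σ := by
      rw [hlam, ← Real.rpow_mul h0.le]
      congr 1
      exact div_mul_cancel₀ σ (by linarith : (1:ℝ) - σ ≠ 0)
    have hlameq : lam = σ ^ σ * lam ^ σ := by
      have h7 : lam ^ ((1 - σ) + σ) = lam ^ (1 - σ) * lam ^ σ := Real.rpow_add hlampos _ _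
      simp only [sub_add_cancel, Real.rpow_one] at h7
      calc lam = lam ^ (1 - σ) * lam ^ σ := h7
        _ = σ ^ σ * lam ^ σ := by rw [hlam1σ]
    have t₁ : lam * (x / (σ * lam)) ^ σ = x ^ σ := by
      rw [Real.div_rpow hx (by positivity), Real.mul_rpow h0.le hlampos.le]
      calc lam * (x ^ σ / (σ ^ σ * lam ^ σ))
          = (σ ^ σ * lam ^ σ) * (x ^ σ / (σ ^ σ * lam ^ σ)) := by rw [← hlameq]
        _ = x ^ σ := by
            have hd : (0:ℝ) < σ ^ σ * lam ^ σ := by positivity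
            field_simp
    -- second term is ≥ e
    have hq : ((e/σ) ^ (1/σ)) ^ σ = e/σ := by
      rw [one_div, Real.rpow_inv_rpow heσ h0.ne']
    have t₂ : e ≤ (1 - lam) * ((e/σ) ^ (1/σ) / (1 - lam)) ^ σ := by
      rw [Real.div_rpow (Real.rpow_nonneg heσ _) h1l.le, hq]
      have hfrac : (1 - lam) * ((e/σ) / (1 - lam) ^ σ) = (1 - lam) ^ (1 - σ) * (e/σ) := by
        have hne : ((1:ℝ) - lam) ^ σ ≠ 0 := by positivity
        have h1mlam : (1-lam) ^ (1-σ) * (1-lam) ^ σ = 1 - lam := by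
          rw [← Real.rpow_add h1l]; norm_num
        have hdd : (1-lam)/(1-lam) ^ σ = (1-lam) ^ (1-σ) := by
          rw [div_eq_iff hne]; exact h1mlam.symm
        calc (1 - lam) * ((e/σ) / (1 - lam) ^ σ)
            = ((1-lam)/(1-lam) ^ σ) * (e/σ) := by ring
          _ = (1 - lam) ^ (1 - σ) * (e/σ) := by rw [hdd]
      rw [hfrac]
      calc e = σ * (e/σ) := by field_simp
        _ ≤ (1 - lam) ^ (1 - σ) * (e/σ) := mul_le_mul_of_nonneg_right hA heσ
    linarith [t₁, t₂]
  have hRHS : 0 ≤ x / σ + (e/σ) ^ (1/σ) := by positivity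
  calc (x ^ σ + e) ^ (1/σ)
      ≤ ((x / σ + (e/σ) ^ (1/σ)) ^ σ) ^ (1/σ) :=
        Real.rpow_le_rpow (by positivity) key (by positivity)
    _ = x / σ + (e/σ) ^ (1/σ) := by
        rw [one_div] at hRHS ⊢
        exact Real.rpow_rpow_inv hRHS h0.ne'

/-- FTC with a.e. bounded derivative. -/
lemma gronwall_aux_ftc {f g φ : ℝ → ℝ} {a b : ℝ} (hab : a ≤ b)
    (hderiv : ∀ x ∈ Icc a b, HasDerivAt f (g x) x)
    (hφ : ContinuousOn φ (Icc a b))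
    (hle : ∀ᵐ x ∂(volume.restrict (Icc a b)), g x ≤ φ x) :
    f b - f a ≤ ∫ u in a..b, φ u := by
  set ψ : ℝ → ℝ := fun u => max (φ u) (g u) with hψ
  have hψeq : ψ =ᵐ[volume.restrict (Icc a b)] φ := by
    filter_upwards [hle] with x hx
    exact max_eq_left hx
  have hφint : IntegrableOn φ (Icc a b) := hφ.integrableOn_compact isCompact_Icc
  have hψint : IntegrableOn ψ (Icc a b) := hφint.congr hψeq.symm
  have h1 : f b - f a ≤ ∫ u in a..b, ψ u := by
    apply intervalIntegral.sub_le_integral_of_hasDeriv_right_of_le hab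
      (fun x hx => (hderiv x hx).continuousAt.continuousWithinAt)
      (fun x hx => (hderiv x (mem_Icc_of_Ioo hx)).hasDerivWithinAt)
      hψint (fun x _ => le_max_right _ _)
  have h2 : ∫ u in a..b, ψ u = ∫ u in a..b, φ u := by
    apply intervalIntegral.integral_congr_ae
    have h3 := (ae_restrict_iff' measurableSet_Icc).1 hψeq
    filter_upwards [h3] with x hx hxI
    exact hx (mem_of_mem_of_subset hxI (by rw [uIoc_of_le hab]; exact Ioc_subset_Icc_self))
  linarith [h1, h2.le, h2.ge]


/-- Gronwall-type lemma with constant data (application of Lemma 2.7 in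
Lemma 4.2): a dissipative inequality with a sublinear term yields an
eventually uniform bound. -/
theorem gronwall_sublinear_const
    (y y' : ℝ → ℝ) (t₀ σ β₂ C₀ m₁ : ℝ)
    (hσ0 : 0 < σ) (hσ1 : σ < 1) (hβ₂ : 0 < β₂) (hC₀ : 0 ≤ C₀) (hm₁ : 0 ≤ m₁)
    (hnonneg : ∀ t ∈ Ici t₀, 0 ≤ y t)
    (hderiv : ∀ t ∈ Ici t₀, HasDerivAt y (y' t) t)
    (hineq : ∀ᵐ t ∂(volume.restrict (Ici t₀)),
      y' t + β₂ * y t ≤ C₀ * y t ^ (1 - σ) + m₁) :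
    (∀ t ∈ Ici t₀,
      y t ≤ (1 / σ) * y t₀ * Real.exp (-β₂ * (t - t₀))
        + (1 / σ) * m₁ * (Real.exp β₂ / (1 - Real.exp (-β₂)))
        + (C₀ * (Real.exp (β₂ * σ) / (1 - Real.exp (-(β₂ * σ))))) ^ (1 / σ)) ∧
    Filter.limsup y Filter.atTop ≤
      (1 / σ) * m₁ * (Real.exp β₂ / (1 - Real.exp (-β₂)))
        + (C₀ * (Real.exp (β₂ * σ) / (1 - Real.exp (-(β₂ * σ))))) ^ (1 / σ) := by
  have hν : 0 < β₂ * σ := by positivity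
  have hy₀ : 0 ≤ y t₀ := hnonneg t₀ (mem_Ici.2 le_rfl)
  set V : ℝ := m₁ / (σ * β₂) with hV
  have hVnn : 0 ≤ V := by positivity
  have hVeq : m₁ = σ * β₂ * V := by rw [hV]; field_simp
  -- Step 1: comparison with the supersolution, for every ε > 0
  have comp : ∀ ε > (0:ℝ), ∀ T ∈ Ici t₀,
      y T ≤ (1/σ) * y t₀ * Real.exp (-β₂ * (T - t₀)) + ((C₀/β₂ + ε)/σ) ^ (1/σ) + V := by
    intro ε hε T hT
    set b : ℝ := C₀ / β₂ + ε with hb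
    have hbpos : 0 < b := by positivity
    have hCb : C₀ ≤ β₂ * b := by
      rw [hb, mul_add]
      have h8 : β₂ * (C₀/β₂) = C₀ := by field_simp
      nlinarith
    set g : ℝ → ℝ := fun t => (y t₀) ^ σ * Real.exp (-(σ*β₂)*(t - t₀)) + b with hg
    have hgpos : ∀ t, 0 < g t := fun t =>
      add_pos_of_nonneg_of_pos (mul_nonneg (Real.rpow_nonneg hy₀ _) (Real.exp_pos _).le) hbpos
    have hgb : ∀ t, b ≤ g t := fun t =>
      le_add_of_nonneg_left (mul_nonneg (Real.rpow_nonneg hy₀ _) (Real.exp_pos _).le)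
    have hgderiv : ∀ t, HasDerivAt g (-(σ*β₂) * (g t - b)) t := by
      intro t
      have h1 : HasDerivAt (fun t : ℝ => -(σ*β₂)*(t - t₀)) (-(σ*β₂)) t := by
        simpa using ((hasDerivAt_id t).sub_const t₀).const_mul (-(σ*β₂))
      have h2 := h1.exp
      have h3 := (h2.const_mul ((y t₀) ^ σ)).add_const b
      refine h3.congr_deriv ?_
      simp only [hg]
      ring
    set w : ℝ → ℝ := fun t => (g t) ^ (1/σ) + V with hw
    set wd : ℝ → ℝ := fun t => (1/σ) * (g t) ^ (1/σ - 1) * (-(σ*β₂) * (g t - b)) with hwd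
    have hwpos : ∀ t, 0 < w t := fun t =>
      add_pos_of_pos_of_nonneg (Real.rpow_pos_of_pos (hgpos t) _) hVnn
    have hwderiv : ∀ t, HasDerivAt w (wd t) t := by
      intro t
      have h4 : HasDerivAt (fun z : ℝ => z ^ (1/σ)) ((1/σ) * (g t) ^ (1/σ - 1)) (g t) :=
        Real.hasDerivAt_rpow_const (Or.inl (hgpos t).ne')
      exact (h4.comp t (hgderiv t)).add_const V
    have hgrpow : ∀ t, (g t) ^ (1/σ - 1) * g t = (g t) ^ (1/σ) := by
      intro t
      rw [← Real.rpow_add_one (hgpos t).ne']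
      norm_num
    -- supersolution inequality
    have hkey : ∀ t, C₀ * (w t) ^ (1-σ) + m₁ ≤ wd t + β₂ * w t := by
      intro t
      have hΦpos : 0 < (g t) ^ (1/σ) := Real.rpow_pos_of_pos (hgpos t) _
      have e1 : ((g t) ^ (1/σ)) ^ (1-σ) = (g t) ^ (1/σ - 1) := by
        rw [← Real.rpow_mul (hgpos t).le]
        congr 1
        field_simp
      have hain : (w t) ^ (1-σ) ≤ (g t) ^ (1/σ - 1) + (1-σ) * (V / (g t)) := by
        have hsplit : w t = (g t) ^ (1/σ) * (1 + V / ((g t) ^ (1/σ))) := by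
          simp only [hw]
          field_simp
        have e5 : ((g t) ^ (1/σ)) ^ (1-σ) * (V / (g t) ^ (1/σ)) = V / g t := by
          rw [e1]
          have hgg : (g t) ^ (1/σ - 1) / (g t) ^ (1/σ) = (g t)⁻¹ := by
            rw [← Real.rpow_sub (hgpos t)]
            norm_num
            exact Real.rpow_neg_one (g t)
          calc (g t) ^ (1/σ - 1) * (V / (g t) ^ (1/σ))
              = V * ((g t) ^ (1/σ - 1) / (g t) ^ (1/σ)) := by ring
            _ = V * (g t)⁻¹ := by rw [hgg]
            _ = V / g t := by rw [div_eq_mul_inv]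
        calc (w t) ^ (1-σ)
            = ((g t) ^ (1/σ)) ^ (1-σ) * (1 + V / ((g t) ^ (1/σ))) ^ (1-σ) := by
              rw [← Real.mul_rpow hΦpos.le (by positivity), ← hsplit]
          _ ≤ ((g t) ^ (1/σ)) ^ (1-σ) * (1 + (1-σ) * (V / ((g t) ^ (1/σ)))) := by
              apply mul_le_mul_of_nonneg_left _ (Real.rpow_nonneg hΦpos.le _)
              exact rpow_one_add_le_one_add_mul_self
                (le_trans (by norm_num) (by positivity : (0:ℝ) ≤ V / (g t) ^ (1/σ)))
                (by linarith) (by linarith)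
          _ = ((g t) ^ (1/σ)) ^ (1-σ) + (1-σ) * (((g t) ^ (1/σ)) ^ (1-σ) * (V / (g t) ^ (1/σ))) := by
              ring
          _ = (g t) ^ (1/σ - 1) + (1-σ) * (V / (g t)) := by rw [e5, e1]
      have c2 : C₀ * ((g t) ^ (1/σ - 1)) ≤ β₂ * b * ((g t) ^ (1/σ - 1)) :=
        mul_le_mul_of_nonneg_right hCb (Real.rpow_nonneg (hgpos t).le _)
      have c3 : C₀ * ((1-σ) * (V / (g t))) ≤ (1-σ) * (β₂ * V) := by
        have d1 : C₀ / g t ≤ β₂ := by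
          rw [div_le_iff₀ (hgpos t)]
          calc C₀ ≤ β₂ * b := hCb
            _ ≤ β₂ * g t := by nlinarith [hgb t]
        calc C₀ * ((1-σ) * (V / (g t))) = ((1-σ) * V) * (C₀ / g t) := by ring
          _ ≤ ((1-σ) * V) * β₂ := by
              apply mul_le_mul_of_nonneg_left d1
              have : (0:ℝ) ≤ 1 - σ := by linarith
              positivity
          _ = (1-σ) * (β₂ * V) := by ring
      have hmono1 : C₀ * (w t) ^ (1-σ) ≤ β₂ * b * ((g t) ^ (1/σ - 1)) + (1-σ) * (β₂ * V) := by
        calc C₀ * (w t) ^ (1-σ)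
            ≤ C₀ * ((g t) ^ (1/σ - 1) + (1-σ) * (V / (g t))) := mul_le_mul_of_nonneg_left hain hC₀
          _ = C₀ * ((g t) ^ (1/σ - 1)) + C₀ * ((1-σ) * (V / (g t))) := by ring
          _ ≤ β₂ * b * ((g t) ^ (1/σ - 1)) + (1-σ) * (β₂ * V) := add_le_add c2 c3
      have hwsum : wd t + β₂ * w t = β₂ * b * ((g t) ^ (1/σ - 1)) + β₂ * V := by
        have e6 : wd t = -β₂ * ((g t) ^ (1/σ - 1) * (g t)) + β₂ * b * ((g t) ^ (1/σ - 1)) := by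
          simp only [hwd]
          field_simp
          ring
        rw [e6, hgrpow t]
        simp only [hw]
        ring
      rw [hwsum]
      have e7 : m₁ = σ * (β₂ * V) := by rw [hVeq]; ring
      linarith [hmono1]
    -- strict gap at the initial time
    have hinit : y t₀ < w t₀ := by
      have hgt₀ : g t₀ = (y t₀) ^ σ + b := by simp [hg]
      have h9 : ((y t₀) ^ σ) ^ (1/σ) = y t₀ := by
        rw [one_div, Real.rpow_rpow_inv hy₀ hσ0.ne']
      have h10 : (y t₀) ^ σ < g t₀ := by rw [hgt₀]; linarith
      have h11 : ((y t₀) ^ σ) ^ (1/σ) < (g t₀) ^ (1/σ) :=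
        Real.rpow_lt_rpow (Real.rpow_nonneg hy₀ _) h10 (by positivity)
      calc y t₀ = ((y t₀) ^ σ) ^ (1/σ) := h9.symm
        _ < (g t₀) ^ (1/σ) := h11
        _ ≤ w t₀ := by simp only [hw]; linarith
    -- comparison on [t₀, ∞)
    have hcomp : ∀ t ∈ Ici t₀, y t ≤ w t := by
      by_contra hcon
      push_neg at hcon
      obtain ⟨T', hT'mem, hT'lt⟩ := hcon
      set S : Set ℝ := {t | t ∈ Icc t₀ T' ∧ w t ≤ y t} with hS
      have hSne : S.Nonempty := ⟨T', ⟨⟨hT'mem, le_rfl⟩, hT'lt.le⟩⟩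
      have hSbdd : BddBelow S := ⟨t₀, fun t ht => ht.1.1⟩
      have hcontw : ∀ t, ContinuousAt w t := by
        intro t
        have h12 := (Real.continuousAt_rpow_const (g t) (1/σ)
          (Or.inl (hgpos t).ne')).comp (hgderiv t).continuousAt
        exact h12.add continuousAt_const
      have hSclosed : IsClosed S := by
        have hcy : ContinuousOn (fun t => y t - w t) (Icc t₀ T') := fun t ht =>
          ((hderiv t ht.1).continuousAt.sub (hcontw t)).continuousWithinAt
        have hSeq : S = Icc t₀ T' ∩ (fun t => y t - w t) ⁻¹' (Ici 0) := by
          ext t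
          simp only [hS, mem_setOf_eq, mem_inter_iff, mem_preimage, mem_Ici, sub_nonneg]
        rw [hSeq]
        exact hcy.preimage_isClosed_of_isClosed isClosed_Icc isClosed_Ici
      set τ := sInf S with hτdef
      have hτS : τ ∈ S := hSclosed.csInf_mem hSne hSbdd
      have hτ0 : t₀ ≤ τ := hτS.1.1
      have hτgt : t₀ < τ := by
        rcases lt_or_eq_of_le hτ0 with h | h
        · exact h
        · exact absurd (h ▸ hτS.2) (not_le.2 hinit)
      have hIci : Icc t₀ τ ⊆ Ici t₀ := fun u hu => hu.1
      -- integrated inequality for y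
      have hder2 : ∀ u ∈ Icc t₀ τ, HasDerivAt (fun s => Real.exp (β₂*s) * y s)
          (Real.exp (β₂*u) * (y' u + β₂ * y u)) u := by
        intro u hu
        have h5 : HasDerivAt (fun s : ℝ => Real.exp (β₂*s)) (Real.exp (β₂*u) * β₂) u := by
          simpa using ((hasDerivAt_id u).const_mul β₂).exp
        have h6 := h5.mul (hderiv u (hIci hu))
        refine h6.congr_deriv ?_
        ring
      have hφcont : ContinuousOn (fun u => Real.exp (β₂*u) * (C₀ * (w u) ^ (1-σ) + m₁))
          (Icc t₀ τ) := by
        intro u _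
        apply ContinuousAt.continuousWithinAt
        have hc1 : ContinuousAt (fun u : ℝ => Real.exp (β₂*u)) u :=
          (Real.continuous_exp.comp (continuous_const.mul continuous_id)).continuousAt
        have hc2 : ContinuousAt (fun u => (w u) ^ (1-σ)) u :=
          (Real.continuousAt_rpow_const (w u) (1-σ) (Or.inl (hwpos u).ne')).comp (hcontw u)
        exact hc1.mul ((hc2.const_mul C₀).add continuousAt_const)
      have hae : ∀ᵐ u ∂(volume.restrict (Icc t₀ τ)),
          Real.exp (β₂*u) * (y' u + β₂ * y u)
            ≤ Real.exp (β₂*u) * (C₀ * (w u) ^ (1-σ) + m₁) := by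
        have h6 := ae_restrict_of_ae_restrict_of_subset hIci hineq
        have h7 : ∀ᵐ u ∂(volume.restrict (Icc t₀ τ)), u ∈ Icc t₀ τ :=
          ae_restrict_mem measurableSet_Icc
        have h8 : ∀ᵐ (u : ℝ) ∂(volume.restrict (Icc t₀ τ)), u ≠ τ := by
          refine ae_restrict_of_ae ?_
          rw [MeasureTheory.ae_iff]
          have : {a : ℝ | ¬ a ≠ τ} = {τ} := by ext a; simp
          rw [this]
          exact measure_singleton τ
        filter_upwards [h6, h7, h8] with u h₁ h₂ h₃
        have hyw : y u ≤ w u := by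
          by_contra hc
          push_neg at hc
          have huS : u ∈ S := ⟨⟨h₂.1, le_trans h₂.2 hτS.1.2⟩, hc.le⟩
          have := csInf_le hSbdd huS
          exact absurd (lt_of_le_of_ne h₂.2 h₃) (not_lt.2 this)
        have hryw : (y u) ^ (1-σ) ≤ (w u) ^ (1-σ) :=
          Real.rpow_le_rpow (hnonneg u (hIci h₂)) hyw (by linarith)
        apply mul_le_mul_of_nonneg_left _ (Real.exp_pos _).le
        calc y' u + β₂ * y u ≤ C₀ * (y u) ^ (1-σ) + m₁ := h₁
          _ ≤ C₀ * (w u) ^ (1-σ) + m₁ := by nlinarith [mul_le_mul_of_nonneg_left hryw hC₀]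
      have hFTCy : Real.exp (β₂*τ) * y τ - Real.exp (β₂*t₀) * y t₀
          ≤ ∫ u in t₀..τ, Real.exp (β₂*u) * (C₀ * (w u) ^ (1-σ) + m₁) :=
        gronwall_aux_ftc hτ0 hder2 hφcont hae
      -- exact FTC for w
      have hder3 : ∀ u ∈ uIcc t₀ τ, HasDerivAt (fun s => Real.exp (β₂*s) * w s)
          (Real.exp (β₂*u) * (wd u + β₂ * w u)) u := by
        intro u _
        have h5 : HasDerivAt (fun s : ℝ => Real.exp (β₂*s)) (Real.exp (β₂*u) * β₂) u := by
          simpa using ((hasDerivAt_id u).const_mul β₂).exp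
        have h6 := h5.mul (hwderiv u)
        refine h6.congr_deriv ?_
        ring
      have hcwd : ∀ u, ContinuousAt (fun s => Real.exp (β₂*s) * (wd s + β₂ * w s)) u := by
        intro u
        have hc1 : ContinuousAt (fun s : ℝ => Real.exp (β₂*s)) u :=
          (Real.continuous_exp.comp (continuous_const.mul continuous_id)).continuousAt
        have hc3 : ContinuousAt (fun s => (g s) ^ (1/σ - 1)) u :=
          (Real.continuousAt_rpow_const (g u) (1/σ - 1) (Or.inl (hgpos u).ne')).comp
            (hgderiv u).continuousAt
        have hc4 : ContinuousAt g u := (hgderiv u).continuousAt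
        have hcwd' : ContinuousAt wd u := by
          simp only [hwd]
          exact (continuousAt_const.mul hc3).mul
            (continuousAt_const.mul (hc4.sub continuousAt_const))
        exact hc1.mul (hcwd'.add ((hcontw u).const_mul β₂))
      have hwint : IntervalIntegrable (fun u => Real.exp (β₂*u) * (wd u + β₂ * w u))
          volume t₀ τ := by
        apply ContinuousOn.intervalIntegrable
        intro u _
        exact (hcwd u).continuousWithinAt
      have hFTCw : ∫ u in t₀..τ, Real.exp (β₂*u) * (wd u + β₂ * w u)
          = Real.exp (β₂*τ) * w τ - Real.exp (β₂*t₀) * w t₀ :=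
        intervalIntegral.integral_eq_sub_of_hasDerivAt hder3 hwint
      have hφint2 : IntervalIntegrable (fun u => Real.exp (β₂*u) * (C₀ * (w u) ^ (1-σ) + m₁))
          volume t₀ τ := by
        apply ContinuousOn.intervalIntegrable
        rw [uIcc_of_le hτ0]
        exact hφcont
      have hmono2 : (∫ u in t₀..τ, Real.exp (β₂*u) * (C₀ * (w u) ^ (1-σ) + m₁))
          ≤ ∫ u in t₀..τ, Real.exp (β₂*u) * (wd u + β₂ * w u) := by
        apply intervalIntegral.integral_mono_on hτ0 hφint2 hwint
        intro u _
        exact mul_le_mul_of_nonneg_left (hkey u) (Real.exp_pos _).le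
      have h13 : 0 ≤ Real.exp (β₂*τ) * (y τ - w τ) :=
        mul_nonneg (Real.exp_pos _).le (sub_nonneg.2 hτS.2)
      have h14 : Real.exp (β₂*t₀) * (y t₀ - w t₀) < 0 :=
        mul_neg_of_pos_of_neg (Real.exp_pos _) (sub_neg.2 hinit)
      nlinarith [hFTCy, hFTCw, hmono2]
    -- split the supersolution at T
    have hyT := hcomp T hT
    have hxσ : (y t₀) ^ σ * Real.exp (-(σ*β₂)*(T - t₀))
        = (y t₀ * Real.exp (-β₂*(T - t₀))) ^ σ := by
      rw [Real.mul_rpow hy₀ (Real.exp_pos _).le]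
      congr 1
      rw [Real.rpow_def_of_pos (Real.exp_pos _), Real.log_exp]
      have h15 : -β₂*(T - t₀) * σ = -(σ*β₂)*(T - t₀) := by ring
      rw [h15]
    have hsplit2 := gronwall_aux_split
      (mul_nonneg hy₀ (Real.exp_pos (-β₂*(T - t₀))).le) hbpos.le hσ0 hσ1
    have hgT : g T = (y t₀ * Real.exp (-β₂*(T - t₀))) ^ σ + b := by
      simp only [hg]
      rw [hxσ]
    calc y T ≤ w T := hyT
      _ = ((y t₀ * Real.exp (-β₂*(T - t₀))) ^ σ + b) ^ (1/σ) + V := by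
          simp only [hw]; rw [hgT]
      _ ≤ (y t₀ * Real.exp (-β₂*(T - t₀))) / σ + (b/σ) ^ (1/σ) + V := by
          linarith [hsplit2]
      _ = (1/σ) * y t₀ * Real.exp (-β₂*(T - t₀)) + ((C₀/β₂ + ε)/σ) ^ (1/σ) + V := by
          rw [hb]; ring
  -- Step 2: let ε → 0
  have comp0 : ∀ T ∈ Ici t₀,
      y T ≤ (1/σ) * y t₀ * Real.exp (-β₂ * (T - t₀)) + (C₀/β₂/σ) ^ (1/σ) + V := by
    intro T hT
    have hcont : ContinuousAt (fun ε : ℝ =>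
        (1/σ) * y t₀ * Real.exp (-β₂ * (T - t₀)) + ((C₀/β₂ + ε)/σ) ^ (1/σ) + V) 0 := by
      have h1 : ContinuousAt (fun ε : ℝ => (C₀/β₂ + ε)/σ) 0 :=
        ((continuousAt_const.add continuousAt_id).div_const σ)
      have h2 : ContinuousAt (fun ε : ℝ => ((C₀/β₂ + ε)/σ) ^ (1/σ)) 0 := by
        apply ContinuousAt.rpow_const h1
        right; positivity
      exact (continuousAt_const.add h2).add continuousAt_const
    have hev : ∀ᶠ ε in nhdsWithin 0 (Ioi 0),
        y T ≤ (1/σ) * y t₀ * Real.exp (-β₂ * (T - t₀)) + ((C₀/β₂ + ε)/σ) ^ (1/σ) + V := by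
      filter_upwards [self_mem_nhdsWithin] with ε hε
      exact comp ε hε T hT
    have hlim := (hcont.tendsto).mono_left (nhdsWithin_le_nhds (s := Ioi (0:ℝ)))
    have := ge_of_tendsto hlim hev
    simpa using this
  -- budget inequalities
  have hbud1 : V ≤ (1/σ) * m₁ * (Real.exp β₂ / (1 - Real.exp (-β₂))) := by
    have h1 := gronwall_aux_C hβ₂
    calc V = (1/σ) * m₁ * (1/β₂) := by rw [hV]; field_simp
      _ ≤ (1/σ) * m₁ * (Real.exp β₂ / (1 - Real.exp (-β₂))) := by
          apply mul_le_mul_of_nonneg_left h1 (by positivity)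
  have hbud2 : (C₀/β₂/σ) ^ (1/σ)
      ≤ (C₀ * (Real.exp (β₂ * σ) / (1 - Real.exp (-(β₂ * σ))))) ^ (1/σ) := by
    apply Real.rpow_le_rpow (by positivity) _ (by positivity)
    have h1 := gronwall_aux_C hν
    calc C₀/β₂/σ = C₀ * (1/(β₂ * σ)) := by field_simp
      _ ≤ C₀ * (Real.exp (β₂ * σ) / (1 - Real.exp (-(β₂ * σ)))) :=
          mul_le_mul_of_nonneg_left h1 hC₀
  have main : ∀ t ∈ Ici t₀,
      y t ≤ (1 / σ) * y t₀ * Real.exp (-β₂ * (t - t₀))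
        + (1 / σ) * m₁ * (Real.exp β₂ / (1 - Real.exp (-β₂)))
        + (C₀ * (Real.exp (β₂ * σ) / (1 - Real.exp (-(β₂ * σ))))) ^ (1 / σ) := by
    intro t ht
    have := comp0 t ht
    linarith [hbud1, hbud2]
  refine ⟨main, ?_⟩
  -- limsup part
  set A := (1 / σ) * m₁ * (Real.exp β₂ / (1 - Real.exp (-β₂)))
    + (C₀ * (Real.exp (β₂ * σ) / (1 - Real.exp (-(β₂ * σ))))) ^ (1 / σ) with hA
  have hco : Filter.IsCoboundedUnder (· ≤ ·) Filter.atTop y := by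
    apply Filter.isCoboundedUnder_le_of_eventually_le Filter.atTop (x := 0)
    filter_upwards [Filter.eventually_ge_atTop t₀] with t ht
    exact hnonneg t ht
  have hdec : Filter.Tendsto (fun t => (1/σ) * y t₀ * Real.exp (-β₂ * (t - t₀)))
      Filter.atTop (nhds 0) := by
    have h0 : Filter.Tendsto (fun t : ℝ => β₂ * (t - t₀)) Filter.atTop Filter.atTop := by
      apply Filter.Tendsto.const_mul_atTop hβ₂
      exact Filter.tendsto_atTop_add_const_right _ (-t₀) Filter.tendsto_id
    have h1 : Filter.Tendsto (fun t : ℝ => -β₂ * (t - t₀)) Filter.atTop Filter.atBot := by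
      have hfun : (fun t : ℝ => -β₂ * (t - t₀)) = (fun x : ℝ => -x) ∘ (fun t : ℝ => β₂ * (t - t₀)) := by
        funext t
        simp only [Function.comp_apply]
        ring
      rw [hfun]
      exact Filter.tendsto_neg_atTop_atBot.comp h0
    have h2 := Real.tendsto_exp_atBot.comp h1
    have h3 := h2.const_mul ((1/σ) * y t₀)
    simpa [Function.comp, mul_assoc] using h3
  apply le_of_forall_pos_le_add
  intro ε hε
  apply Filter.limsup_le_of_le hco
  filter_upwards [Filter.eventually_ge_atTop t₀, hdec.eventually_lt_const hε] with t h₁ h₂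
  have := main t h₁
  rw [hA]
  linarith
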